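/- Let n, q be non-negative integers, and let R ≥ 1 and β ∈ [0,1] be reals satisfying R ≥ e^{−βq}·n. Suppose G is a graph on n vertices such that every vertex subset U with |U| ≥ R satisfies e(G[U]) ≥ β·C(|U|, 2). Then for every integer s ≥ q, the number of independent sets of G of size s is at most C(n, q)·C(⌊R⌋, s − q), where C(·,·) denotes the binomial coefficient. -/

import Mathlib

open scoped Classical

/-- `eIn G U`: the number of edges of the induced subgraph `G[U]`. -/
noncomputable def eIn {n : ℕ} (G : SimpleGraph (Fin n)) (U : Finset (Fin n)) : ℕ :=
  ((U ×ˢ U).filter (fun p => p.1 < p.2 ∧ G.Adj p.1 p.2)).card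

variable {n : ℕ}

/-- degree of `v` inside `A`. -/
noncomputable def degA (G : SimpleGraph (Fin n)) (A : Finset (Fin n)) (v : Fin n) : ℕ :=
  (A.filter (G.Adj v)).card

lemma argmax_nonempty (G : SimpleGraph (Fin n)) {A : Finset (Fin n)} (h : A.Nonempty) :
    (A.filter (fun v => ∀ w ∈ A, degA G A w ≤ degA G A v)).Nonempty := by
  obtain ⟨b, hb, hmax⟩ := A.exists_max_image (degA G A) h
  exact ⟨b, Finset.mem_filter.2 ⟨hb, hmax⟩⟩

/-- a vertex of maximum degree inside `A` (with deterministic tie-breaking). -/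
noncomputable def pick (G : SimpleGraph (Fin n)) (A : Finset (Fin n)) (h : A.Nonempty) : Fin n :=
  (A.filter (fun v => ∀ w ∈ A, degA G A w ≤ degA G A v)).min' (argmax_nonempty G h)

lemma pick_mem (G : SimpleGraph (Fin n)) (A : Finset (Fin n)) (h : A.Nonempty) :
    pick G A h ∈ A := by
  have h2 := Finset.min'_mem _ (argmax_nonempty G h)
  rw [Finset.mem_filter] at h2
  exact h2.1

lemma pick_max (G : SimpleGraph (Fin n)) (A : Finset (Fin n)) (h : A.Nonempty) :
    ∀ w ∈ A, degA G A w ≤ degA G A (pick G A h) := by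
  have h2 := Finset.min'_mem _ (argmax_nonempty G h)
  rw [Finset.mem_filter] at h2
  exact h2.2

/-- The Kleitman–Winston algorithm with oracle `F`, running on state `(A, S)` with given fuel. -/
noncomputable def run (G : SimpleGraph (Fin n)) (q : ℕ) (F : Finset (Fin n)) :
    ℕ → Finset (Fin n) → Finset (Fin n) → Finset (Fin n) × Finset (Fin n)
  | 0, A, S => (A, S)
  | (f+1), A, S =>
    if h : S.card < q ∧ A.Nonempty then
      if pick G A h.2 ∈ F then
        run G q F f ((A.erase (pick G A h.2)).filter (fun w => ¬ G.Adj (pick G A h.2) w))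
          (insert (pick G A h.2) S)
      else run G q F f (A.erase (pick G A h.2)) S
    else (A, S)

lemma run_snd_mono (G : SimpleGraph (Fin n)) (q : ℕ) (F : Finset (Fin n)) :
    ∀ f A S, S ⊆ (run G q F f A S).2 := by
  intro f
  induction f with
  | zero => intro A S; simp [run]
  | succ f ih =>
    intro A S
    rw [run]
    split
    · split
      · exact (Finset.subset_insert _ _).trans (ih _ _)
      · exact ih _ _
    · exact Finset.Subset.refl _

lemma run_snd_subset (G : SimpleGraph (Fin n)) (q : ℕ) (F : Finset (Fin n)) :
    ∀ f A S, (run G q F f A S).2 ⊆ S ∪ F := by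
  intro f
  induction f with
  | zero => intro A S; simp [run]
  | succ f ih =>
    intro A S
    rw [run]
    split
    · rename_i h
      split
      · rename_i hv
        refine (ih _ _).trans ?_
        intro x hx
        simp only [Finset.mem_union, Finset.mem_insert] at hx ⊢
        rcases hx with (rfl | hx) | hx
        · exact Or.inr hv
        · exact Or.inl hx
        · exact Or.inr hx
      · exact ih _ _
    · exact Finset.subset_union_left

lemma run_oracle (G : SimpleGraph (Fin n)) (q : ℕ) (F : Finset (Fin n)) :
    ∀ f A S, S ⊆ F → Disjoint A S →
      run G q ((run G q F f A S).2) f A S = run G q F f A S := by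
  intro f
  induction f with
  | zero => intro A S _ _; simp [run]
  | succ f ih =>
    intro A S hSF hdisj
    by_cases h : S.card < q ∧ A.Nonempty
    · set v := pick G A h.2 with hv_def
      by_cases hv : v ∈ F
      · have e1 : run G q F (f+1) A S =
            run G q F f ((A.erase v).filter (fun w => ¬ G.Adj v w)) (insert v S) := by
          rw [run, dif_pos h, if_pos hv]
        have hvT : v ∈ (run G q F f ((A.erase v).filter (fun w => ¬ G.Adj v w)) (insert v S)).2 :=
          run_snd_mono G q F f _ _ (Finset.mem_insert_self v S)
        have e2 : run G q ((run G q F f ((A.erase v).filter (fun w => ¬ G.Adj v w)) (insert v S)).2)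
            (f+1) A S =
            run G q ((run G q F f ((A.erase v).filter (fun w => ¬ G.Adj v w)) (insert v S)).2)
            f ((A.erase v).filter (fun w => ¬ G.Adj v w)) (insert v S) := by
          rw [run, dif_pos h, if_pos hvT]
        rw [e1, e2]
        refine ih _ _ (Finset.insert_subset hv hSF) ?_
        rw [Finset.disjoint_left]
        intro x hx hxS
        have hxA := Finset.mem_filter.1 hx
        rcases Finset.mem_insert.1 hxS with rfl | hxS'
        · exact (Finset.mem_erase.1 hxA.1).1 rfl
        · exact (Finset.disjoint_left.1 hdisj (Finset.mem_of_mem_erase hxA.1)) hxS'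
      · have e1 : run G q F (f+1) A S = run G q F f (A.erase v) S := by
          rw [run, dif_pos h, if_neg hv]
        have hvT : v ∉ (run G q F f (A.erase v) S).2 := by
          intro hmem
          rcases Finset.mem_union.1 (run_snd_subset G q F f _ _ hmem) with hS | hF
          · exact (Finset.disjoint_left.1 hdisj (pick_mem G A h.2)) hS
          · exact hv hF
        have e2 : run G q ((run G q F f (A.erase v) S).2) (f+1) A S =
            run G q ((run G q F f (A.erase v) S).2) f (A.erase v) S := by
          rw [run, dif_pos h, if_neg hvT]
        rw [e1, e2]
        exact ih _ _ hSF (hdisj.mono_left (Finset.erase_subset _ _))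
    · have e1 : run G q F (f+1) A S = (A, S) := by rw [run, dif_neg h]
      rw [e1]
      rw [run, dif_neg h]

lemma sum_degA (G : SimpleGraph (Fin n)) (A : Finset (Fin n)) :
    2 * eIn G A ≤ ∑ v ∈ A, degA G A v := by
  classical
  set s := (A ×ˢ A).filter (fun p => G.Adj p.1 p.2) with hs
  have h1 : s.card = ∑ v ∈ A, degA G A v := by
    rw [Finset.card_eq_sum_card_fiberwise
      (f := Prod.fst) (t := A)
      (fun p hp => (Finset.mem_product.1 (Finset.mem_filter.1 hp).1).1)]
    refine Finset.sum_congr rfl ?_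
    intro v hv
    have himg : s.filter (fun p => p.1 = v) = (A.filter (G.Adj v)).image (fun w => (v, w)) := by
      ext ⟨a, b⟩
      simp only [hs, Finset.mem_filter, Finset.mem_product, Finset.mem_image]
      constructor
      · rintro ⟨⟨⟨ha, hb⟩, hadj⟩, rfl⟩
        exact ⟨b, ⟨hb, hadj⟩, rfl⟩
      · rintro ⟨w, ⟨hw, hadj⟩, heq⟩
        obtain ⟨rfl, rfl⟩ := Prod.mk.injEq .. ▸ heq
        exact ⟨⟨⟨hv, hw⟩, hadj⟩, rfl⟩
    rw [himg, Finset.card_image_of_injective _ (fun x y h => (Prod.mk.injEq .. ▸ h).2), degA]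
  have hsplit : (s.filter (fun p => p.1 < p.2)).card
      + (s.filter (fun p => ¬ p.1 < p.2)).card = s.card :=
    Finset.card_filter_add_card_filter_not _
  have hA : s.filter (fun p => p.1 < p.2)
      = (A ×ˢ A).filter (fun p => p.1 < p.2 ∧ G.Adj p.1 p.2) := by
    rw [hs, Finset.filter_filter]
    ext p
    simp only [Finset.mem_filter]
    tauto
  have hB : eIn G A ≤ (s.filter (fun p => ¬ p.1 < p.2)).card := by
    apply Finset.card_le_card_of_injOn (fun p => (p.2, p.1))
    · intro p hp
      rw [Finset.mem_coe] at hp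
      obtain ⟨hmem, hlt, hadj⟩ := Finset.mem_filter.1 hp
      obtain ⟨h1', h2'⟩ := Finset.mem_product.1 hmem
      refine Finset.mem_filter.2 ⟨Finset.mem_filter.2 ⟨Finset.mem_product.2 ⟨h2', h1'⟩, hadj.symm⟩, ?_⟩
      exact fun hcon => lt_asymm hlt hcon
    · intro p _ r _ h
      have := Prod.mk.injEq .. ▸ h
      exact Prod.ext this.2 this.1
  calc 2 * eIn G A = eIn G A + eIn G A := (two_mul _)
    _ ≤ (s.filter (fun p => p.1 < p.2)).card + (s.filter (fun p => ¬ p.1 < p.2)).card := by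
        rw [hA]; exact Nat.add_le_add (le_refl _) hB
    _ = s.card := hsplit
    _ = ∑ v ∈ A, degA G A v := h1

lemma degA_pick_ge (G : SimpleGraph (Fin n)) {A : Finset (Fin n)} (hA : A.Nonempty)
    {R β : ℝ} (hβ0 : 0 ≤ β)
    (hG : ∀ U : Finset (Fin n), R ≤ (U.card : ℝ) →
      β * (U.card.choose 2 : ℝ) ≤ (eIn G U : ℝ))
    (hRA : R ≤ (A.card : ℝ)) (hR : 1 ≤ R) :
    β * ((A.card : ℝ) - 1) ≤ (degA G A (pick G A hA) : ℝ) := by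
  have hcardpos : (0 : ℝ) < (A.card : ℝ) := lt_of_lt_of_le (lt_of_lt_of_le zero_lt_one hR) hRA
  have h1 : β * ((A.card.choose 2 : ℕ) : ℝ) ≤ (eIn G A : ℝ) := hG A hRA
  have h2 : 2 * eIn G A ≤ ∑ v ∈ A, degA G A v := sum_degA G A
  have h3 : ∑ v ∈ A, degA G A v ≤ A.card * degA G A (pick G A hA) := by
    calc ∑ v ∈ A, degA G A v ≤ A.card • degA G A (pick G A hA) :=
          Finset.sum_le_card_nsmul _ _ _ (pick_max G A hA)
      _ = A.card * degA G A (pick G A hA) := by rw [smul_eq_mul]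
  have h2' : (2 : ℝ) * (eIn G A : ℝ) ≤ ∑ v ∈ A, (degA G A v : ℝ) := by
    push_cast
    exact_mod_cast h2
  have h3' : (∑ v ∈ A, (degA G A v : ℝ)) ≤ (A.card : ℝ) * (degA G A (pick G A hA) : ℝ) := by
    exact_mod_cast h3
  rw [Nat.cast_choose_two] at h1
  have key : (A.card : ℝ) * (β * ((A.card : ℝ) - 1)) ≤ (A.card : ℝ) * (degA G A (pick G A hA) : ℝ) := by
    nlinarith [h1, h2', h3']
  exact le_of_mul_le_mul_left key hcardpos

lemma card_step (G : SimpleGraph (Fin n)) {A : Finset (Fin n)} {v : Fin n} (hv : v ∈ A) :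
    ((A.erase v).filter (fun w => ¬ G.Adj v w)).card + degA G A v = A.card - 1 := by
  classical
  have h1 : ((A.erase v).filter (G.Adj v)).card
      + ((A.erase v).filter (fun w => ¬ G.Adj v w)).card = (A.erase v).card :=
    Finset.card_filter_add_card_filter_not _
  have h2 : (A.erase v).filter (G.Adj v) = A.filter (G.Adj v) := by
    rw [Finset.filter_erase]
    exact Finset.erase_eq_of_notMem (by simp [G.irrefl])
  rw [h2] at h1
  rw [Finset.card_erase_of_mem hv] at h1
  rw [degA]
  omega

lemma run_indep (G : SimpleGraph (Fin n)) (q : ℕ) (I : Finset (Fin n))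
    (hI : ∀ a ∈ I, ∀ b ∈ I, ¬ G.Adj a b) (hq : q ≤ I.card) :
    ∀ f A S, A.card ≤ f → S ⊆ I → I ⊆ S ∪ A → Disjoint A S → S.card ≤ q →
      (run G q I f A S).2 ⊆ I ∧ I ⊆ (run G q I f A S).2 ∪ (run G q I f A S).1 ∧
        (run G q I f A S).2.card = q := by
  intro f
  induction f with
  | zero =>
    intro A S hAf hSI hIS _ hSq
    have hA : A = ∅ := Finset.card_eq_zero.1 (Nat.le_zero.1 hAf)
    subst hA
    simp only [run]
    rw [Finset.union_empty] at hIS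
    have hcard : S.card = q := le_antisymm hSq (le_trans hq (Finset.card_le_card hIS))
    exact ⟨hSI, fun w hw => Finset.mem_union_left _ (hIS hw), hcard⟩
  | succ f ih =>
    intro A S hAf hSI hIS hdisj hSq
    by_cases h : S.card < q ∧ A.Nonempty
    · set v := pick G A h.2 with hv_def
      have hvA : v ∈ A := pick_mem G A h.2
      by_cases hv : v ∈ I
      · have e1 : run G q I (f+1) A S =
            run G q I f ((A.erase v).filter (fun w => ¬ G.Adj v w)) (insert v S) := by
          rw [run, dif_pos h, if_pos hv]
        rw [e1]
        refine ih _ _ ?_ (Finset.insert_subset hv hSI) ?_ ?_ ?_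
        · have : ((A.erase v).filter (fun w => ¬ G.Adj v w)).card ≤ (A.erase v).card :=
            Finset.card_le_card (Finset.filter_subset _ _)
          rw [Finset.card_erase_of_mem hvA] at this
          omega
        · intro w hw
          rcases Finset.mem_union.1 (hIS hw) with hwS | hwA
          · exact Finset.mem_union_left _ (Finset.mem_insert_of_mem hwS)
          · by_cases hwv : w = v
            · exact Finset.mem_union_left _ (hwv ▸ Finset.mem_insert_self v S)
            · refine Finset.mem_union_right _ (Finset.mem_filter.2
                ⟨Finset.mem_erase.2 ⟨hwv, hwA⟩, ?_⟩)
              exact hI v hv w hw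
        · rw [Finset.disjoint_left]
          intro x hx hxS
          have hxA := Finset.mem_filter.1 hx
          rcases Finset.mem_insert.1 hxS with rfl | hxS'
          · exact (Finset.mem_erase.1 hxA.1).1 rfl
          · exact (Finset.disjoint_left.1 hdisj (Finset.mem_of_mem_erase hxA.1)) hxS'
        · rw [Finset.card_insert_of_notMem (fun hvS =>
            (Finset.disjoint_left.1 hdisj hvA) hvS)]
          omega
      · have e1 : run G q I (f+1) A S = run G q I f (A.erase v) S := by
          rw [run, dif_pos h, if_neg hv]
        rw [e1]
        refine ih _ _ ?_ hSI ?_ (hdisj.mono_left (Finset.erase_subset _ _)) hSq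
        · rw [Finset.card_erase_of_mem hvA]; omega
        · intro w hw
          rcases Finset.mem_union.1 (hIS hw) with hwS | hwA
          · exact Finset.mem_union_left _ hwS
          · refine Finset.mem_union_right _ (Finset.mem_erase.2 ⟨?_, hwA⟩)
            rintro rfl
            exact hv hw
    · have e1 : run G q I (f+1) A S = (A, S) := by rw [run, dif_neg h]
      rw [e1]
      rcases not_and_or.1 h with hSc | hAne
      · exact ⟨hSI, fun w hw => Finset.mem_union.2 (Finset.mem_union.1 (hIS hw)),
          le_antisymm hSq (not_lt.1 hSc)⟩
      · have hA : A = ∅ := Finset.not_nonempty_iff_eq_empty.1 hAne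
        subst hA
        rw [Finset.union_empty] at hIS
        have hcard : S.card = q := le_antisymm hSq (le_trans hq (Finset.card_le_card hIS))
        exact ⟨hSI, fun w hw => Finset.mem_union_left _ (hIS hw), hcard⟩

lemma run_card_le (G : SimpleGraph (Fin n)) (q : ℕ) (F : Finset (Fin n))
    {R β : ℝ} (hR : 1 ≤ R) (hβ0 : 0 ≤ β) (hβ1 : β ≤ 1)
    (hG : ∀ U : Finset (Fin n), R ≤ (U.card : ℝ) →
      β * (U.card.choose 2 : ℝ) ≤ (eIn G U : ℝ)) :
    ∀ f A S, (A.card : ℝ) ≤ max R (Real.exp (-(β * S.card)) * n) →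
      ((run G q F f A S).1.card : ℝ) ≤
        max R (Real.exp (-(β * (run G q F f A S).2.card)) * n) := by
  intro f
  induction f with
  | zero => intro A S hbound; simpa [run] using hbound
  | succ f ih =>
    intro A S hbound
    by_cases h : S.card < q ∧ A.Nonempty
    · set v := pick G A h.2 with hv_def
      have hvA : v ∈ A := pick_mem G A h.2
      by_cases hv : v ∈ F
      · have e1 : run G q F (f+1) A S =
            run G q F f ((A.erase v).filter (fun w => ¬ G.Adj v w)) (insert v S) := by
          rw [run, dif_pos h, if_pos hv]
        rw [e1]
        apply ih
        -- establish the bound for the new state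
        have hins : ((insert v S).card : ℝ) ≤ (S.card : ℝ) + 1 := by
          have := Finset.card_insert_le v S
          exact_mod_cast this
        have hexpmono : Real.exp (-(β * ((S.card : ℝ) + 1))) * n ≤
            Real.exp (-(β * ((insert v S).card : ℝ))) * n := by
          apply mul_le_mul_of_nonneg_right _ (Nat.cast_nonneg n)
          apply Real.exp_le_exp.2
          nlinarith
        have hcard' : (((A.erase v).filter (fun w => ¬ G.Adj v w)).card : ℝ)
            = (A.card : ℝ) - 1 - (degA G A v : ℝ) := by
          have hns := card_step G hvA
          have hA1 : 1 ≤ A.card := Finset.card_pos.2 h.2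
          have hnat : ((A.erase v).filter (fun w => ¬ G.Adj v w)).card + degA G A v + 1
              = A.card := by omega
          have := congrArg (Nat.cast : ℕ → ℝ) hnat
          push_cast at this
          linarith
        by_cases hcase : R ≤ (A.card : ℝ)
        · have hdeg : β * ((A.card : ℝ) - 1) ≤ (degA G A v : ℝ) :=
            degA_pick_ge G h.2 hβ0 hG hcase hR
          have step1 : (((A.erase v).filter (fun w => ¬ G.Adj v w)).card : ℝ)
              ≤ (1 - β) * (A.card : ℝ) := by
            rw [hcard']
            nlinarith [Nat.cast_nonneg (α := ℝ) A.card]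
          rcases le_max_iff.1 hbound with hAbound | hAbound
          · refine le_max_iff.2 (Or.inl ?_)
            nlinarith [Nat.cast_nonneg (α := ℝ) A.card]
          have step2 : (1 - β) * (A.card : ℝ) ≤ Real.exp (-β) * (Real.exp (-(β * S.card)) * n) := by
            have he : 1 - β ≤ Real.exp (-β) := by
              have := Real.add_one_le_exp (-β)
              linarith
            have hApos : (0:ℝ) ≤ (A.card : ℝ) := Nat.cast_nonneg _
            have hEpos : (0:ℝ) ≤ Real.exp (-(β * S.card)) * n :=
              mul_nonneg (Real.exp_pos _).le (Nat.cast_nonneg _)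
            calc (1 - β) * (A.card : ℝ) ≤ Real.exp (-β) * (A.card : ℝ) :=
                  mul_le_mul_of_nonneg_right he hApos
              _ ≤ Real.exp (-β) * (Real.exp (-(β * S.card)) * n) :=
                  mul_le_mul_of_nonneg_left hAbound (Real.exp_pos _).le
          have step3 : Real.exp (-β) * (Real.exp (-(β * S.card)) * n)
              = Real.exp (-(β * ((S.card : ℝ) + 1))) * n := by
            rw [← mul_assoc, ← Real.exp_add]
            ring_nf
          refine le_max_iff.2 (Or.inr ?_)
          calc (((A.erase v).filter (fun w => ¬ G.Adj v w)).card : ℝ)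
              ≤ (1 - β) * (A.card : ℝ) := step1
            _ ≤ Real.exp (-β) * (Real.exp (-(β * S.card)) * n) := step2
            _ = Real.exp (-(β * ((S.card : ℝ) + 1))) * n := step3
            _ ≤ Real.exp (-(β * ((insert v S).card : ℝ))) * n := hexpmono
        · refine le_max_iff.2 (Or.inl ?_)
          have hsub : (((A.erase v).filter (fun w => ¬ G.Adj v w)).card : ℝ) ≤ (A.card : ℝ) := by
            have : ((A.erase v).filter (fun w => ¬ G.Adj v w)).card ≤ A.card :=
              Finset.card_le_card ((Finset.filter_subset _ _).trans (Finset.erase_subset _ _))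
            exact_mod_cast this
          linarith [not_le.1 hcase]
      · have e1 : run G q F (f+1) A S = run G q F f (A.erase v) S := by
          rw [run, dif_pos h, if_neg hv]
        rw [e1]
        apply ih
        have : ((A.erase v).card : ℝ) ≤ (A.card : ℝ) := by
          exact_mod_cast Finset.card_le_card (Finset.erase_subset _ _)
        exact this.trans hbound
    · have e1 : run G q F (f+1) A S = (A, S) := by rw [run, dif_neg h]
      rw [e1]
      exact hbound


theorem graph_container :
    ∀ (n q : ℕ) (R β : ℝ), 1 ≤ R → 0 ≤ β → β ≤ 1 →
      Real.exp (-(β * q)) * n ≤ R →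
      ∀ G : SimpleGraph (Fin n),
        (∀ U : Finset (Fin n), R ≤ (U.card : ℝ) →
          β * (U.card.choose 2 : ℝ) ≤ (eIn G U : ℝ)) →
        ∀ s : ℕ, q ≤ s →
          ((Finset.univ : Finset (Fin n)).powerset.filter
            (fun I => I.card = s ∧ ∀ a ∈ I, ∀ b ∈ I, ¬ G.Adj a b)).card
          ≤ n.choose q * (⌊R⌋₊.choose (s - q)) := by
  intro n q R β hR hβ0 hβ1 hRn G hG s hqs
  classical
  have hunivcard : (Finset.univ : Finset (Fin n)).card = n := by
    rw [Finset.card_univ, Fintype.card_fin]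
  -- the target finset
  set T : Finset (Finset (Fin n)) := (Finset.univ.powersetCard q).filter
      (fun S => (run G q S n Finset.univ ∅).2 = S) with hT
  set B := T.sigma (fun S => ((run G q S n Finset.univ ∅).1).powersetCard (s - q)) with hBdef
  have hstep : ((Finset.univ : Finset (Fin n)).powerset.filter
      (fun I => I.card = s ∧ ∀ a ∈ I, ∀ b ∈ I, ¬ G.Adj a b)).card ≤ B.card := by
    apply Finset.card_le_card_of_injOn
      (fun I => ⟨(run G q I n Finset.univ ∅).2, I \ (run G q I n Finset.univ ∅).2⟩)
    · intro I hImem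
      have h' := Finset.mem_filter.1 (Finset.mem_coe.1 hImem)
      have hIcard := h'.2.1
      have hIindep := h'.2.2
      have hqI : q ≤ I.card := hIcard ▸ hqs
      have hinv := run_indep G q I hIindep hqI n Finset.univ ∅
        (le_of_eq hunivcard) (Finset.empty_subset I)
        (fun w _ => Finset.mem_union_right _ (Finset.mem_univ w))
        (Finset.disjoint_empty_right _) (Nat.zero_le q)
      obtain ⟨hSI, hIcont, hScard⟩ := hinv
      have horacle := run_oracle G q I n Finset.univ ∅ (Finset.empty_subset I)
        (Finset.disjoint_empty_right _)
      rw [Finset.mem_coe, Finset.mem_sigma]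
      constructor
      · rw [hT, Finset.mem_filter]
        refine ⟨Finset.mem_powersetCard.2 ⟨Finset.subset_univ _, hScard⟩, ?_⟩
        rw [horacle]
      · rw [horacle]
        rw [Finset.mem_powersetCard]
        constructor
        · intro w hw
          obtain ⟨hwI, hwS⟩ := Finset.mem_sdiff.1 hw
          rcases Finset.mem_union.1 (hIcont hwI) with h1 | h1
          · exact absurd h1 hwS
          · exact h1
        · rw [Finset.card_sdiff_of_subset hSI, hIcard, hScard]
    · intro I hImem J hJmem heq
      simp only [Sigma.mk.inj_iff] at heq
      obtain ⟨h1, h2⟩ := heq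
      have h2' : I \ (run G q I n Finset.univ ∅).2 = J \ (run G q J n Finset.univ ∅).2 := by
        exact congrArg (fun x => x) (heq_iff_eq.1 h2)
      have hSI : (run G q I n Finset.univ ∅).2 ⊆ I := by
        have h' := Finset.mem_filter.1 (Finset.mem_coe.1 hImem)
        have hqI : q ≤ I.card := h'.2.1 ▸ hqs
        exact (run_indep G q I h'.2.2 hqI n Finset.univ ∅
          (le_of_eq hunivcard) (Finset.empty_subset I)
          (fun w _ => Finset.mem_union_right _ (Finset.mem_univ w))
          (Finset.disjoint_empty_right _) (Nat.zero_le q)).1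
      have hSJ : (run G q J n Finset.univ ∅).2 ⊆ J := by
        have h' := Finset.mem_filter.1 (Finset.mem_coe.1 hJmem)
        have hqJ : q ≤ J.card := h'.2.1 ▸ hqs
        exact (run_indep G q J h'.2.2 hqJ n Finset.univ ∅
          (le_of_eq hunivcard) (Finset.empty_subset J)
          (fun w _ => Finset.mem_union_right _ (Finset.mem_univ w))
          (Finset.disjoint_empty_right _) (Nat.zero_le q)).1
      calc I = (run G q I n Finset.univ ∅).2 ∪ (I \ (run G q I n Finset.univ ∅).2) :=
            (Finset.union_sdiff_of_subset hSI).symm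
        _ = (run G q J n Finset.univ ∅).2 ∪ (J \ (run G q J n Finset.univ ∅).2) := by
            rw [h2', h1]
        _ = J := Finset.union_sdiff_of_subset hSJ
  refine hstep.trans ?_
  rw [hBdef, Finset.card_sigma]
  have hbound : ∀ S ∈ T, (((run G q S n Finset.univ ∅).1).powersetCard (s - q)).card
      ≤ ⌊R⌋₊.choose (s - q) := by
    intro S hS
    rw [hT, Finset.mem_filter] at hS
    obtain ⟨hSmem, hSfix⟩ := hS
    have hScard : S.card = q := (Finset.mem_powersetCard.1 hSmem).2
    have hinit : ((Finset.univ : Finset (Fin n)).card : ℝ)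
        ≤ max R (Real.exp (-(β * ((∅ : Finset (Fin n)).card : ℝ))) * n) := by
      rw [hunivcard]
      refine le_max_iff.2 (Or.inr ?_)
      simp
    have hfin := run_card_le G q S hR hβ0 hβ1 hG n Finset.univ ∅ hinit
    rw [hSfix, hScard] at hfin
    have hfin' : ((run G q S n Finset.univ ∅).1.card : ℝ) ≤ R := by
      refine hfin.trans (max_le (le_refl R) hRn)
    have hfloor : (run G q S n Finset.univ ∅).1.card ≤ ⌊R⌋₊ := Nat.le_floor hfin'
    rw [Finset.card_powersetCard]
    exact Nat.choose_le_choose _ hfloor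
  calc ∑ S ∈ T, (((run G q S n Finset.univ ∅).1).powersetCard (s - q)).card
      ≤ T.card * ⌊R⌋₊.choose (s - q) := by
        have := Finset.sum_le_card_nsmul T _ _ hbound
        simpa [smul_eq_mul] using this
    _ ≤ n.choose q * ⌊R⌋₊.choose (s - q) := by
        apply Nat.mul_le_mul_right
        calc T.card ≤ (Finset.univ.powersetCard q : Finset (Finset (Fin n))).card :=
              Finset.card_le_card (Finset.filter_subset _ _)
          _ = n.choose q := by rw [Finset.card_powersetCard, hunivcard]
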